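/- Let $A$ be a vector space with bilinear operation $\diamond$, and let $(P, \cdot)$ be the $\mathbb{Z}$-graded perm algebra on $\{f_1\partial_1 + f_2\partial_2 : f_i \in \mathbf{k}[x_1^{\pm},x_2^{\pm}]\}$ with $(x_1^{i_1}x_2^{i_2}\partial_s) \cdot (x_1^{j_1}x_2^{j_2}\partial_t) = \delta_{s,1}x_1^{i_1+j_1+1}x_2^{i_2+j_2}\partial_t + \delta_{s,2}x_1^{i_1+j_1}x_2^{i_2+j_2+1}\partial_t$. Then the bracket $[a_1 \otimes p_1, a_2 \otimes p_2] = a_1 \diamond a_2 \otimes p_1 \cdot p_2 - a_2 \diamond a_1 \otimes p_2 \cdot p_1$ defines a Lie algebra structure on $A \otimes P$ if and only if $(A, \diamond)$ is a pre-Lie algebra. -/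

import Mathlib

set_option maxHeartbeats 4000000


open TensorProduct

/-- Let `A` be a vector space with a bilinear operation `dia`, and let `P` be the
`ℤ`-graded perm algebra on `{f₁∂₁ + f₂∂₂}` (free module on basis `(i₁,i₂,s) ↔ x₁^{i₁}x₂^{i₂}∂ₛ`)
with `(x₁^{i₁}x₂^{i₂}∂ₛ)·(x₁^{j₁}x₂^{j₂}∂ₜ) = δ_{s,1}x₁^{i₁+j₁+1}x₂^{i₂+j₂}∂ₜ +
δ_{s,2}x₁^{i₁+j₁}x₂^{i₂+j₂+1}∂ₜ`. Then the bracket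
`[a₁⊗p₁, a₂⊗p₂] = a₁⋄a₂ ⊗ p₁·p₂ - a₂⋄a₁ ⊗ p₂·p₁` defines a Lie algebra structure on
`A ⊗ P` if and only if `(A, ⋄)` is a pre-Lie algebra. -/
theorem stmt6 {k A : Type*} [Field k] [CharZero k] [AddCommGroup A] [Module k A]
    (dia : A →ₗ[k] A →ₗ[k] A)
    (mul : ((ℤ × ℤ × Fin 2) →₀ k) →ₗ[k] ((ℤ × ℤ × Fin 2) →₀ k) →ₗ[k] ((ℤ × ℤ × Fin 2) →₀ k))
    (hmul : ∀ (i₁ i₂ j₁ j₂ : ℤ) (s t : Fin 2),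
      mul (Finsupp.single (i₁, i₂, s) 1) (Finsupp.single (j₁, j₂, t) 1) =
        if s = 0 then Finsupp.single (i₁ + j₁ + 1, i₂ + j₂, t) 1
        else Finsupp.single (i₁ + j₁, i₂ + j₂ + 1, t) 1)
    (B : (A ⊗[k] ((ℤ × ℤ × Fin 2) →₀ k)) →ₗ[k] (A ⊗[k] ((ℤ × ℤ × Fin 2) →₀ k)) →ₗ[k]
      (A ⊗[k] ((ℤ × ℤ × Fin 2) →₀ k)))
    (hB : ∀ (a₁ a₂ : A) (p₁ p₂ : (ℤ × ℤ × Fin 2) →₀ k),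
      B (a₁ ⊗ₜ[k] p₁) (a₂ ⊗ₜ[k] p₂) =
        (dia a₁ a₂) ⊗ₜ[k] (mul p₁ p₂) - (dia a₂ a₁) ⊗ₜ[k] (mul p₂ p₁)) :
    ((∀ x, B x x = 0) ∧ (∀ x y z, B (B x y) z + B (B y z) x + B (B z x) y = 0)) ↔
    (∀ a b c : A, dia (dia a b) c - dia a (dia b c) = dia (dia b a) c - dia b (dia a c)) := by
  have bsub : ∀ (u v w : A ⊗[k] ((ℤ × ℤ × Fin 2) →₀ k)), B (u - v) w = B u w - B v w := by
    intro u v w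
    have huv : u - v = u + (-1 : k) • v := by module
    rw [huv, map_add, LinearMap.add_apply, map_smul, LinearMap.smul_apply]
    module
  constructor
  · rintro ⟨-, hJ⟩ a b c
    have key := hJ (a ⊗ₜ[k] Finsupp.single ((0:ℤ),(0:ℤ),(0:Fin 2)) 1)
      (b ⊗ₜ[k] Finsupp.single ((0:ℤ),(0:ℤ),(0:Fin 2)) 1)
      (c ⊗ₜ[k] Finsupp.single ((0:ℤ),(0:ℤ),(1:Fin 2)) 1)
    simp only [hB, hmul, bsub, map_sub, LinearMap.sub_apply, Fin.isValue, reduceIte,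
      one_ne_zero] at key
    norm_num at key
    have key2 := congrArg (fun z => TensorProduct.finsuppScalarRight k k A (ℤ × ℤ × Fin 2) z
      ((2:ℤ),(0:ℤ),(1:Fin 2))) key
    simp only [map_sub, map_add, Finsupp.sub_apply, Finsupp.add_apply,
      TensorProduct.finsuppScalarRight_apply_tmul_apply, Finsupp.single_apply, map_zero,
      Finsupp.coe_zero, Pi.zero_apply, Prod.mk.injEq, one_smul, zero_smul, one_ne_zero,
      if_true, if_false] at key2
    norm_num at key2
    rw [← sub_eq_zero]
    abel_nf at key2 ⊢
    exact key2
  · intro h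
    have hskew : ∀ u v, B u v + B v u = 0 := by
      have h0 : B + B.flip = 0 := by
        ext a p b q
        simp only [TensorProduct.AlgebraTensorModule.curry_apply, LinearMap.coe_comp,
          Function.comp_apply, Finsupp.lsingle_apply, TensorProduct.curry_apply,
          LinearMap.coe_restrictScalars, LinearMap.add_apply, LinearMap.zero_apply,
          LinearMap.flip_apply, hB]
        abel
      intro u v
      have := LinearMap.congr_fun (LinearMap.congr_fun h0 u) v
      simpa using this
    constructor
    · intro x
      have h2 : (2 : k) • B x x = 0 := by
        rw [two_smul]; exact hskew x x
      rcases smul_eq_zero.mp h2 with h3 | h3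
      · exact absurd h3 two_ne_zero
      · exact h3
    · have hT : (B.compr₂ B) + ((LinearMap.lflip (R₀ := k)).toLinearMap ∘ₗ (B.compr₂ B)).flip +
          ((LinearMap.lflip (R₀ := k)).toLinearMap ∘ₗ ((LinearMap.lflip (R₀ := k)).toLinearMap ∘ₗ (B.compr₂ B)).flip).flip = 0 := by
        ext a p b q c r
        simp only [TensorProduct.AlgebraTensorModule.curry_apply, LinearMap.coe_comp,
          Function.comp_apply, Finsupp.lsingle_apply, TensorProduct.curry_apply,
          LinearMap.coe_restrictScalars, LinearMap.add_apply, LinearMap.zero_apply,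
          LinearMap.compr₂_apply, LinearMap.flip_apply, LinearMap.lflip_apply, LinearEquiv.coe_coe]
        obtain ⟨i1, i2, s⟩ := p
        obtain ⟨j1, j2, t⟩ := q
        obtain ⟨l1, l2, u⟩ := r
        have e1 := eq_add_of_sub_eq (h a b c)
        have e2 := eq_add_of_sub_eq (h a c b)
        have e3 := eq_add_of_sub_eq (h b c a)
        fin_cases s <;> fin_cases t <;> fin_cases u <;>
          simp only [Fin.mk_zero, Fin.mk_one, Fin.isValue] <;>
          simp only [hB, hmul, bsub, map_sub, LinearMap.sub_apply, Fin.isValue, reduceIte,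
            one_ne_zero] <;>
          rw [e1, e2, e3] <;>
          simp only [TensorProduct.add_tmul, TensorProduct.sub_tmul] <;>
          ring_nf <;>
          abel
      intro x y z
      have := LinearMap.congr_fun (LinearMap.congr_fun (LinearMap.congr_fun hT x) y) z
      simpa only [LinearMap.add_apply, LinearMap.zero_apply, LinearMap.compr₂_apply,
        LinearMap.flip_apply, LinearMap.coe_comp, Function.comp_apply,
        LinearMap.lflip_apply, LinearEquiv.coe_coe] using this
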